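/- Let σ > 0, β > 0, ρ > 0. There exists a radius R > 0, depending only on σ, β, ρ, such that for every global solution x : ℝ → ℝ³ of the Lorenz system there exists a time T with ‖x(t)‖ ≤ R for all t ≥ T (i.e. the Lorenz system is dissipative in the sense of Levinson: it possesses a bounded globally absorbing set). -/

import Mathlib

open Filter Topology

set_option maxHeartbeats 1000000 in
/-- The Lorenz system is dissipative in the sense of Levinson: for positive
parameters `σ, β, ρ` there is a radius `R > 0` (depending only on the parameters) such that
every global solution eventually stays in the ball of radius `R`. -/
theorem lorenz_dissipative
    (σ β ρ : ℝ) (hσ : 0 < σ) (hβ : 0 < β) (hρ : 0 < ρ) :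
    ∃ R > (0 : ℝ), ∀ x : ℝ → EuclideanSpace ℝ (Fin 3),
      (∀ t : ℝ,
        HasDerivAt (fun s => x s 0) (σ * (x t 1 - x t 0)) t ∧
        HasDerivAt (fun s => x s 1) (x t 0 * (ρ - x t 2) - x t 1) t ∧
        HasDerivAt (fun s => x s 2) (x t 0 * x t 1 - β * x t 2) t) →
      ∃ T : ℝ, ∀ t ≥ T, ‖x t‖ ≤ R := by
  set a : ℝ := σ + ρ with ha_def
  have ha : 0 < a := by positivity
  set m : ℝ := min (min (2 * σ) 2) β with hm_def
  have hm : 0 < m := by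
    simp only [hm_def, lt_min_iff]
    exact ⟨⟨by linarith, by norm_num⟩, hβ⟩
  have hm1 : m ≤ 2 * σ := (min_le_left _ _).trans (min_le_left _ _)
  have hm2 : m ≤ 2 := (min_le_left _ _).trans (min_le_right _ _)
  have hm3 : m ≤ β := min_le_right _ _
  set C : ℝ := β * a ^ 2 with hC_def
  have hC : 0 < C := by positivity
  clear_value a m C
  subst hC_def
  have hCm : 0 < β * a ^ 2 / m := by positivity
  refine ⟨Real.sqrt (2 * (1 + β * a ^ 2 / m) + 2 * a ^ 2), by positivity, fun x hx => ?_⟩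
  -- Lyapunov function and its derivative
  have hderiv : ∀ t, HasDerivAt (fun s => (x s 0) ^ 2 + (x s 1) ^ 2 + (x s 2 - a) ^ 2)
      (-(2 * σ) * (x t 0) ^ 2 - 2 * (x t 1) ^ 2 - 2 * β * (x t 2) ^ 2
        + 2 * β * a * (x t 2)) t := by
    intro t
    obtain ⟨h0, h1, h2⟩ := hx t
    have d0 : HasDerivAt (fun s => (x s 0) ^ 2)
        (2 * x t 0 * (σ * (x t 1 - x t 0))) t := by simpa using (h0.fun_pow 2)
    have d1 : HasDerivAt (fun s => (x s 1) ^ 2)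
        (2 * x t 1 * (x t 0 * (ρ - x t 2) - x t 1)) t := by simpa using (h1.fun_pow 2)
    have d2 : HasDerivAt (fun s => (x s 2 - a) ^ 2)
        (2 * (x t 2 - a) * (x t 0 * x t 1 - β * x t 2)) t := by
      simpa using ((h2.sub_const a).fun_pow 2)
    have := (d0.add d1).add d2
    refine this.congr_deriv ?_
    rw [ha_def]; ring
  set g : ℝ → ℝ := fun t => (x t 0) ^ 2 + (x t 1) ^ 2 + (x t 2 - a) ^ 2 with hg_def
  have hgron : ∀ t ≥ (0 : ℝ), g t ≤ gronwallBound (g 0) (-m) (β * a ^ 2) t := by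
    intro t ht
    have := le_gronwallBound_of_liminf_deriv_right_le
      (f := g)
      (f' := fun t => -(2 * σ) * (x t 0) ^ 2 - 2 * (x t 1) ^ 2 - 2 * β * (x t 2) ^ 2
        + 2 * β * a * (x t 2))
      (δ := g 0) (K := -m) (ε := β * a ^ 2) (a := 0) (b := t)
      (fun s _ => (hderiv s).continuousAt.continuousWithinAt)
      (fun s _ r hr => (hderiv s).hasDerivWithinAt.liminf_right_slope_le hr)
      le_rfl
      (fun s _ => by
        simp only [hg_def]
        nlinarith [sq_nonneg (x s 0), sq_nonneg (x s 1), sq_nonneg (x s 2),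
          sq_nonneg (x s 2 - a), mul_nonneg hβ.le (sq_nonneg (x s 2))])
      t ⟨ht, le_rfl⟩
    simpa using this
  have hg0 : 0 ≤ g 0 := by simp only [hg_def]; positivity
  have hgcoord : ∀ t, g t = (x t 0) ^ 2 + (x t 1) ^ 2 + (x t 2 - a) ^ 2 := fun _ => rfl
  clear_value g
  -- eventual bound for g
  set δ : ℝ := max (g 0) 1 with hδ_def
  have hδ1 : (1 : ℝ) ≤ δ := le_max_right _ _
  have hgδ : g 0 ≤ δ := le_max_left _ _
  have hδ0 : 0 < δ := lt_of_lt_of_le one_pos hδ1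
  clear_value δ
  refine ⟨Real.log δ / m, fun t ht => ?_⟩
  have hT0 : (0 : ℝ) ≤ Real.log δ / m := div_nonneg (Real.log_nonneg hδ1) hm.le
  have ht0 : (0 : ℝ) ≤ t := le_trans hT0 ht
  have hgt : g t ≤ 1 + β * a ^ 2 / m := by
    have h1 := hgron t ht0
    rw [gronwallBound_of_K_ne_0 (by linarith : -m ≠ 0)] at h1
    have hexp : Real.exp (-m * t) ≤ 1 / δ := by
      rw [ge_iff_le, div_le_iff₀ hm] at ht
      have h : -m * t ≤ -Real.log δ := by nlinarith
      calc Real.exp (-m * t) ≤ Real.exp (-Real.log δ) := Real.exp_le_exp.mpr h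
        _ = 1 / δ := by rw [Real.exp_neg, Real.exp_log hδ0, one_div]
    have hexp0 : 0 < Real.exp (-m * t) := Real.exp_pos _
    have h2 : g 0 * Real.exp (-m * t) ≤ 1 := by
      calc g 0 * Real.exp (-m * t) ≤ δ * (1 / δ) := mul_le_mul hgδ hexp hexp0.le hδ0.le
        _ = 1 := mul_one_div_cancel (ne_of_gt hδ0)
    have h3 : β * a ^ 2 / (-m) * (Real.exp (-m * t) - 1) ≤ β * a ^ 2 / m := by
      have he1 : Real.exp (-m * t) - 1 ≤ 0 := by
        have : Real.exp (-m * t) ≤ 1 := Real.exp_le_one_iff.mpr (by nlinarith)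
        linarith
      have heq : β * a ^ 2 / (-m) * (Real.exp (-m * t) - 1)
          = β * a ^ 2 / m * (1 - Real.exp (-m * t)) := by
        rw [div_neg]; ring
      rw [heq]
      nlinarith
    simp only [div_neg] at h1 h3
    linarith
  -- translate to the norm
  have hnorm : ‖x t‖ = Real.sqrt ((x t 0) ^ 2 + (x t 1) ^ 2 + (x t 2) ^ 2) := by
    rw [EuclideanSpace.norm_eq]
    congr 1
    rw [Fin.sum_univ_three]
    simp [sq_abs]
  rw [hnorm]
  apply Real.sqrt_le_sqrt
  rw [hgcoord t] at hgt
  nlinarith [sq_nonneg (x t 0), sq_nonneg (x t 1), sq_nonneg (x t 2 - 2 * a)]
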